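/- arXiv:1806.04898 — 2 statements merged into one kernel-verified Lean document; each statement's English description precedes it below -/
import Mathlib

section
/- If A = Op^{AW}(G) is the anti-Wick quantization of a bounded continuous function G on ℝ^{2n}, then for all X, Y ∈ ℝ^{2n}: |⟨A Ψ_X, Ψ_Y⟩| ≤ ‖G‖_∞ · exp(-|X - Y|²/8). -/
open MeasureTheory Real Complex

set_option maxHeartbeats 1000000

noncomputable section

abbrev En (n : ℕ) := EuclideanSpace ℝ (Fin n)

/-- The coherent state `Ψ_{x,ξ}(u) = π^{-n/4} exp(-|u-x|²/2 + i u·ξ - (i/2) x·ξ)`. -/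
def cs (n : ℕ) (X : En n × En n) (u : En n) : ℂ :=
  ((Real.pi ^ (-(n : ℝ) / 4) : ℝ) : ℂ) *
    Complex.exp (-((‖u - X.1‖ ^ 2 : ℝ) : ℂ) / 2 + Complex.I * ((inner ℝ u X.2 : ℝ) : ℂ)
      - Complex.I / 2 * ((inner ℝ X.1 X.2 : ℝ) : ℂ))

/-- The standard symplectic form `σ((x,ξ),(y,η)) = y·ξ - x·η`. -/
def symp (n : ℕ) (X Z : En n × En n) : ℝ :=
  (inner ℝ Z.1 X.2 : ℝ) - (inner ℝ X.1 Z.2 : ℝ)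


lemma par_aux {n : ℕ} (a b u : En n) :
    ‖u - a‖ ^ 2 + ‖u - b‖ ^ 2 = 2 * ‖u - (2:ℝ)⁻¹ • (a + b)‖ ^ 2 + ‖a - b‖ ^ 2 / 2 := by
  set p := u - (2:ℝ)⁻¹ • (a + b) with hp
  set d := (2:ℝ)⁻¹ • (b - a) with hd
  have h1 : u - a = p + d := by rw [hp, hd]; module
  have h2 : u - b = p - d := by rw [hp, hd]; module
  have h3 : ‖d‖ ^ 2 = ‖a - b‖ ^ 2 / 4 := by
    rw [hd, norm_smul, norm_sub_rev]
    simp [mul_pow]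
    ring
  have h4 : ‖p + d‖ ^ 2 + ‖p - d‖ ^ 2 = 2 * ‖p‖ ^ 2 + 2 * ‖d‖ ^ 2 := by
    linear_combination norm_add_sq_real p d + norm_sub_sq_real p d
  rw [h1, h2]; rw [h4, h3]; ring

lemma gauss_half (n : ℕ) :
    ∫ v : En n, rexp (-(2:ℝ)⁻¹ * ‖v‖ ^ 2) = (2 * π) ^ ((n : ℝ) / 2) := by
  rw [GaussianFourier.integral_rexp_neg_mul_sq_norm (by norm_num : (0:ℝ) < 2⁻¹)]
  rw [finrank_euclideanSpace_fin]
  congr 1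
  rw [div_eq_mul_inv, inv_inv, mul_comm]

lemma gauss_pair (n : ℕ) (a b : En n) :
    ∫ z : En n, rexp (-((‖z - a‖ ^ 2 + ‖z - b‖ ^ 2) / 4)) =
      (2 * π) ^ ((n : ℝ) / 2) * rexp (-‖a - b‖ ^ 2 / 8) := by
  have key : ∀ z : En n, rexp (-((‖z - a‖ ^ 2 + ‖z - b‖ ^ 2) / 4)) =
      rexp (-(2:ℝ)⁻¹ * ‖z - (2:ℝ)⁻¹ • (a + b)‖ ^ 2) * rexp (-‖a - b‖ ^ 2 / 8) := by
    intro z; rw [← Real.exp_add]; congr 1; rw [par_aux a b z]; ring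
  rw [integral_congr_ae (Filter.Eventually.of_forall key), integral_mul_const]
  have h2 : ∫ z : En n, rexp (-(2:ℝ)⁻¹ * ‖z - (2:ℝ)⁻¹ • (a + b)‖ ^ 2)
      = ∫ v : En n, rexp (-(2:ℝ)⁻¹ * ‖v‖ ^ 2) := by
    rw [← integral_add_right_eq_self (fun v : En n => rexp (-(2:ℝ)⁻¹ * ‖v‖ ^ 2))
        (-((2:ℝ)⁻¹ • (a + b)))]
    exact integral_congr_ae (Filter.Eventually.of_forall fun z => rfl)
  rw [h2, gauss_half]

lemma gauss_pair_integrable (n : ℕ) (a b : En n) :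
    Integrable (fun z : En n => rexp (-((‖z - a‖ ^ 2 + ‖z - b‖ ^ 2) / 4))) := by
  have key : ∀ z : En n, rexp (-((‖z - a‖ ^ 2 + ‖z - b‖ ^ 2) / 4)) =
      rexp (-(2:ℝ)⁻¹ * ‖z - (2:ℝ)⁻¹ • (a + b)‖ ^ 2) * rexp (-‖a - b‖ ^ 2 / 8) := by
    intro z; rw [← Real.exp_add]; congr 1; rw [par_aux a b z]; ring
  rw [integrable_congr (Filter.Eventually.of_forall key)]
  apply Integrable.mul_const
  have base : Integrable (fun v : En n => rexp (-(2:ℝ)⁻¹ * ‖v‖ ^ 2)) := by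
    have h := (GaussianFourier.integrable_cexp_neg_mul_sq_norm_add (V := En n)
      (b := (2:ℂ)⁻¹) (by norm_num) 0 0).norm
    apply h.congr
    filter_upwards with v
    simp [Complex.norm_exp]
    norm_cast
  exact (base.comp_add_right (-((2:ℝ)⁻¹ • (a + b)))).congr
    (Filter.Eventually.of_forall fun z => by simp only [sub_eq_add_neg])

lemma cs_conj_mul {n : ℕ} (Z X : En n × En n) (v : En n) :
    (starRingEnd ℂ) (cs n Z (v + (2:ℝ)⁻¹ • (X.1 + Z.1))) *
      cs n X (v + (2:ℝ)⁻¹ • (X.1 + Z.1)) =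
    (((π ^ (-(n:ℝ)/2) : ℝ) : ℂ) *
      cexp (-((‖X.1 - Z.1‖ ^ 2 : ℝ) : ℂ)/4 +
        Complex.I * (((inner ℝ ((2:ℝ)⁻¹ • (X.1+Z.1)) (X.2 - Z.2) : ℝ)
          + (inner ℝ Z.1 Z.2 : ℝ)/2 - (inner ℝ X.1 X.2 : ℝ)/2 : ℝ) : ℂ))) *
      cexp (-(1:ℂ) * ((‖v‖ : ℝ) : ℂ) ^ 2 + Complex.I * ((inner ℝ (X.2 - Z.2) v : ℝ) : ℂ)) := by
  set m : En n := (2:ℝ)⁻¹ • (X.1 + Z.1) with hm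
  have hv : v + m - (2:ℝ)⁻¹ • (Z.1 + X.1) = v := by rw [hm]; module
  have hre : ‖v + m - Z.1‖ ^ 2 + ‖v + m - X.1‖ ^ 2
      = 2 * ‖v‖ ^ 2 + ‖X.1 - Z.1‖ ^ 2 / 2 := by
    have h := par_aux Z.1 X.1 (v + m)
    rw [hv, norm_sub_rev Z.1] at h
    exact h
  have him : (inner ℝ (v + m) X.2 : ℝ) - (inner ℝ (v + m) Z.2 : ℝ)
      = (inner ℝ (X.2 - Z.2) v : ℝ) + (inner ℝ m (X.2 - Z.2) : ℝ) := by
    simp only [inner_sub_left, inner_sub_right, inner_add_left, real_inner_comm v]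
    ring
  unfold cs
  simp only [← Complex.exp_conj, map_mul, map_add, map_sub, map_neg, map_div₀,
    map_ofNat, Complex.conj_ofReal, Complex.conj_I]
  rw [mul_mul_mul_comm, ← Complex.ofReal_mul, ← Real.rpow_add pi_pos,
    show (-(n:ℝ)/4 + -(n:ℝ)/4) = -(n:ℝ)/2 by ring, mul_assoc,
    ← Complex.exp_add, ← Complex.exp_add]
  congr 2
  have h1 : ((‖v + m - Z.1‖ ^ 2 : ℝ) : ℂ) + ((‖v + m - X.1‖ ^ 2 : ℝ) : ℂ)
      = ((2 * ‖v‖ ^ 2 + ‖X.1 - Z.1‖ ^ 2 / 2 : ℝ) : ℂ) := by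
    rw [← Complex.ofReal_add]; exact_mod_cast congrArg Complex.ofReal hre
  have h2 : ((inner ℝ (v + m) X.2 : ℝ) : ℂ) - ((inner ℝ (v + m) Z.2 : ℝ) : ℂ)
      = (((inner ℝ (X.2 - Z.2) v : ℝ) + (inner ℝ m (X.2 - Z.2) : ℝ) : ℝ) : ℂ) := by
    rw [← Complex.ofReal_sub]; exact_mod_cast congrArg Complex.ofReal him
  push_cast at h1 h2 ⊢
  linear_combination (-(1:ℂ)/2) * h1 + Complex.I * h2

lemma inner_cs {n : ℕ} (Z X : En n × En n)
    (hZ : MemLp (cs n Z) 2 (volume : Measure (En n)))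
    (hX : MemLp (cs n X) 2 (volume : Measure (En n))) :
    ‖(inner ℂ (hZ.toLp (cs n Z)) (hX.toLp (cs n X)) : ℂ)‖ =
      rexp (-((‖X.1 - Z.1‖ ^ 2 + ‖X.2 - Z.2‖ ^ 2) / 4)) := by
  have hi : (inner ℂ (hZ.toLp (cs n Z)) (hX.toLp (cs n X)) : ℂ)
      = ∫ u : En n, (starRingEnd ℂ) (cs n Z u) * cs n X u := by
    rw [MeasureTheory.L2.inner_def]
    apply integral_congr_ae
    filter_upwards [hZ.coeFn_toLp, hX.coeFn_toLp] with u h1 h2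
    rw [h1, h2, RCLike.inner_apply, mul_comm]
  rw [hi, ← integral_add_right_eq_self
      (fun u => (starRingEnd ℂ) (cs n Z u) * cs n X u) ((2:ℝ)⁻¹ • (X.1 + Z.1))]
  rw [integral_congr_ae (Filter.Eventually.of_forall (cs_conj_mul Z X))]
  rw [MeasureTheory.integral_const_mul,
    GaussianFourier.integral_cexp_neg_mul_sq_norm_add (V := En n)
      (by norm_num : (0:ℝ) < (1:ℂ).re) Complex.I (X.2 - Z.2)]
  rw [finrank_euclideanSpace_fin, div_one, Complex.I_sq,
    show (-1 * ((‖X.2 - Z.2‖:ℝ):ℂ) ^ 2 / (4 * 1)) = ((-‖X.2 - Z.2‖^2/4 : ℝ):ℂ) by push_cast; ring,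
    show ((n:ℂ)/2) = (((n:ℝ)/2 : ℝ):ℂ) by push_cast; ring,
    show -((‖X.1 - Z.1‖^2:ℝ):ℂ)/4 = ((-‖X.1 - Z.1‖^2/4 : ℝ):ℂ) by push_cast; ring]
  simp only [norm_mul, Complex.norm_real, Real.norm_eq_abs, Complex.norm_exp,
    Complex.norm_cpow_eq_rpow_re_of_pos pi_pos, Complex.ofReal_re, Complex.add_re,
    Complex.neg_re, Complex.div_re, Complex.mul_re, Complex.I_re, Complex.I_im,
    Complex.ofReal_im, zero_mul, mul_zero, sub_zero, add_zero, one_mul]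
  rw [abs_of_pos (Real.rpow_pos_of_pos pi_pos _), mul_mul_mul_comm,
    ← Real.rpow_add pi_pos, ← Real.exp_add]
  rw [show (-(n:ℝ)/2 + (n:ℝ)/2) = 0 by ring, Real.rpow_zero, one_mul]
  congr 1
  ring

theorem antiWick_decay (n : ℕ) (G : En n × En n → ℂ) (M : ℝ)
    (hGc : Continuous G) (hGb : ∀ Z, ‖G Z‖ ≤ M)
    (hcs : ∀ X : En n × En n, MemLp (cs n X) 2 (volume : Measure (En n)))
    (A : Lp ℂ 2 (volume : Measure (En n)) →L[ℂ] Lp ℂ 2 (volume : Measure (En n)))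
    -- `A = Op^{AW}(G)` : for all `f, g ∈ L²`, `⟨A f, g⟩ = (2π)^{-n} ∫ G(Z) ⟨f,Ψ_Z⟩⟨Ψ_Z,g⟩ dZ`
    (hA : ∀ f g : Lp ℂ 2 (volume : Measure (En n)),
      (inner ℂ g (A f) : ℂ) = ((((2 * Real.pi) ^ n)⁻¹ : ℝ) : ℂ) *
        ∫ Z : En n × En n, G Z * (inner ℂ ((hcs Z).toLp (cs n Z)) f : ℂ) *
          (inner ℂ g ((hcs Z).toLp (cs n Z)) : ℂ))
    (X Y : En n × En n) :
    ‖(inner ℂ ((hcs Y).toLp (cs n Y)) (A ((hcs X).toLp (cs n X))) : ℂ)‖ ≤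
      M * Real.exp (-(‖X.1 - Y.1‖ ^ 2 + ‖X.2 - Y.2‖ ^ 2) / 8) := by
  have hM : 0 ≤ M := le_trans (norm_nonneg _) (hGb X)
  rw [hA, norm_mul]
  have hb : ∀ Z : En n × En n,
      ‖G Z * (inner ℂ ((hcs Z).toLp (cs n Z)) ((hcs X).toLp (cs n X)) : ℂ) *
        (inner ℂ ((hcs Y).toLp (cs n Y)) ((hcs Z).toLp (cs n Z)) : ℂ)‖ ≤
      M * (rexp (-((‖Z.1 - X.1‖ ^ 2 + ‖Z.1 - Y.1‖ ^ 2) / 4)) *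
           rexp (-((‖Z.2 - X.2‖ ^ 2 + ‖Z.2 - Y.2‖ ^ 2) / 4))) := by
    intro Z
    rw [norm_mul, norm_mul, inner_cs Z X (hcs Z) (hcs X), inner_cs Y Z (hcs Y) (hcs Z)]
    have heq : rexp (-((‖X.1 - Z.1‖ ^ 2 + ‖X.2 - Z.2‖ ^ 2) / 4)) *
        rexp (-((‖Z.1 - Y.1‖ ^ 2 + ‖Z.2 - Y.2‖ ^ 2) / 4))
        = rexp (-((‖Z.1 - X.1‖ ^ 2 + ‖Z.1 - Y.1‖ ^ 2) / 4)) *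
          rexp (-((‖Z.2 - X.2‖ ^ 2 + ‖Z.2 - Y.2‖ ^ 2) / 4)) := by
      rw [← Real.exp_add, ← Real.exp_add, norm_sub_rev X.1, norm_sub_rev X.2]
      congr 1; ring
    rw [mul_assoc, heq]
    exact mul_le_mul_of_nonneg_right (hGb Z) (by positivity)
  have hint : Integrable (fun Z : En n × En n =>
      M * (rexp (-((‖Z.1 - X.1‖ ^ 2 + ‖Z.1 - Y.1‖ ^ 2) / 4)) *
           rexp (-((‖Z.2 - X.2‖ ^ 2 + ‖Z.2 - Y.2‖ ^ 2) / 4)))) := by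
    apply Integrable.const_mul
    rw [MeasureTheory.Measure.volume_eq_prod]
    exact (gauss_pair_integrable n X.1 Y.1).mul_prod (gauss_pair_integrable n X.2 Y.2)
  have hval : (∫ Z : En n × En n,
      M * (rexp (-((‖Z.1 - X.1‖ ^ 2 + ‖Z.1 - Y.1‖ ^ 2) / 4)) *
           rexp (-((‖Z.2 - X.2‖ ^ 2 + ‖Z.2 - Y.2‖ ^ 2) / 4))))
      = M * ((2 * π) ^ ((n:ℝ)/2) * rexp (-‖X.1 - Y.1‖ ^ 2 / 8) *
             ((2 * π) ^ ((n:ℝ)/2) * rexp (-‖X.2 - Y.2‖ ^ 2 / 8))) := by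
    rw [MeasureTheory.integral_const_mul, MeasureTheory.Measure.volume_eq_prod,
      integral_prod_mul (f := fun z : En n => rexp (-((‖z - X.1‖ ^ 2 + ‖z - Y.1‖ ^ 2) / 4)))
        (g := fun z : En n => rexp (-((‖z - X.2‖ ^ 2 + ‖z - Y.2‖ ^ 2) / 4))),
      gauss_pair n X.1 Y.1, gauss_pair n X.2 Y.2]
  refine le_trans (mul_le_mul_of_nonneg_left
    (norm_integral_le_of_norm_le hint (Filter.Eventually.of_forall hb)) (norm_nonneg _)) ?_
  rw [hval, Complex.norm_real, Real.norm_eq_abs, abs_of_pos (by positivity)]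
  have h2π : (0:ℝ) < 2 * π := by positivity
  have hne : ((2 * π : ℝ) ^ n) ≠ 0 := by positivity
  have hcomb : ((2 * π) ^ ((n:ℝ)/2)) * ((2 * π) ^ ((n:ℝ)/2)) = (2 * π : ℝ) ^ n := by
    rw [← Real.rpow_add h2π, show ((n:ℝ)/2 + (n:ℝ)/2) = (n:ℝ) by ring, Real.rpow_natCast]
  have hexp : rexp (-‖X.1 - Y.1‖ ^ 2 / 8) * rexp (-‖X.2 - Y.2‖ ^ 2 / 8)
      = rexp (-(‖X.1 - Y.1‖ ^ 2 + ‖X.2 - Y.2‖ ^ 2) / 8) := by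
    rw [← Real.exp_add]; congr 1; ring
  rw [show (((2 * π : ℝ) ^ n)⁻¹ * (M * ((2 * π) ^ ((n:ℝ)/2) * rexp (-‖X.1 - Y.1‖ ^ 2 / 8) *
      ((2 * π) ^ ((n:ℝ)/2) * rexp (-‖X.2 - Y.2‖ ^ 2 / 8)))))
      = (M * (rexp (-‖X.1 - Y.1‖ ^ 2 / 8) * rexp (-‖X.2 - Y.2‖ ^ 2 / 8))) *
        ((((2 * π) ^ ((n:ℝ)/2)) * ((2 * π) ^ ((n:ℝ)/2))) * (((2 * π : ℝ) ^ n)⁻¹)) by ring,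
    hcomb, mul_inv_cancel₀ hne, mul_one, hexp]
end
end

section
/- Let A be a bounded operator on L²(ℝⁿ). For all X, Z ∈ ℝ^{2n}: ⟨A Ψ_{X+Z}, Ψ_{X-Z}⟩ / ⟨Ψ_{X+Z}, Ψ_{X-Z}⟩ = ⟨e^{-Φ_S(Z)} A e^{Φ_S(Z)} Ψ_X, Ψ_X⟩, where e^{±Φ_S(Z)} acts on coherent states via e^{Φ_S(Z)}Ψ_X = exp(½|Z|² + Z·X - (i/2)σ(Z,X)) Ψ_{X+Z}. -/
open MeasureTheory Real Complex

set_option maxHeartbeats 1000000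

noncomputable section

/-- The scalar factor in the action `e^{Φ_S(Z)} Ψ_X = expCoef Z X • Ψ_{X+Z}`. -/
def expCoef (n : ℕ) (Z X : En n × En n) : ℂ :=
  Complex.exp (((‖Z.1‖ ^ 2 + ‖Z.2‖ ^ 2 : ℝ) : ℂ) / 2
    + (((inner ℝ Z.1 X.1 : ℝ) + (inner ℝ Z.2 X.2 : ℝ) : ℝ) : ℂ)
    - Complex.I / 2 * ((symp n Z X : ℝ) : ℂ))

lemma gauss_shift (n : ℕ) (x η : En n) :
    ∫ u : En n, Complex.exp (-(1:ℂ) * ‖u - x‖ ^ 2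
        + (2 * Complex.I) * ((inner ℝ η (u - x) : ℝ) : ℂ))
      = ((Real.pi ^ ((n : ℝ) / 2) : ℝ) : ℂ) * Complex.exp (-((‖η‖ ^ 2 : ℝ) : ℂ)) := by
  have htr : ∫ u : En n, Complex.exp (-(1:ℂ) * ‖u - x‖ ^ 2
        + (2 * Complex.I) * ((inner ℝ η (u - x) : ℝ) : ℂ))
      = ∫ v : En n, Complex.exp (-(1:ℂ) * ‖v‖ ^ 2
        + (2 * Complex.I) * ((inner ℝ η v : ℝ) : ℂ)) := by
    have h := integral_add_right_eq_self (μ := (volume : Measure (En n)))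
      (fun v : En n => Complex.exp (-(1:ℂ) * ‖v‖ ^ 2
        + (2 * Complex.I) * ((inner ℝ η v : ℝ) : ℂ))) (-x)
    simp only [sub_eq_add_neg]
    exact h
  rw [htr, GaussianFourier.integral_cexp_neg_mul_sq_norm_add (by norm_num) (2 * Complex.I) η,
    finrank_euclideanSpace_fin]
  congr 1
  · rw [div_one, show ((n : ℂ) / 2) = (((n : ℝ) / 2 : ℝ) : ℂ) by push_cast; ring,
      ← Complex.ofReal_cpow Real.pi_pos.le]
  · congr 1
    push_cast
    linear_combination ((‖η‖ : ℂ) ^ 2) * Complex.I_sq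

lemma coherent_inner (n : ℕ) (X Z : En n × En n) :
    ∫ u : En n, (starRingEnd ℂ) (cs n (X - Z) u) * cs n (X + Z) u =
      Complex.exp (-((‖Z.1‖ ^ 2 + ‖Z.2‖ ^ 2 : ℝ) : ℂ)
        - Complex.I * ((symp n X Z : ℝ) : ℂ)) := by
  have hE0 : ∀ u : En n, (starRingEnd ℂ) (cs n (X - Z) u) * cs n (X + Z) u
      = ((Real.pi ^ (-(n : ℝ) / 2) : ℝ) : ℂ)
        * Complex.exp (-((‖Z.1‖ ^ 2 : ℝ) : ℂ) + Complex.I * ((inner ℝ X.1 Z.2 : ℝ) : ℂ)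
            - Complex.I * ((inner ℝ Z.1 X.2 : ℝ) : ℂ))
        * Complex.exp (-(1:ℂ) * ‖u - X.1‖ ^ 2
            + (2 * Complex.I) * ((inner ℝ Z.2 (u - X.1) : ℝ) : ℂ)) := by
    intro u
    have e1 : u - (X.1 - Z.1) = (u - X.1) + Z.1 := by abel
    have e2 : u - (X.1 + Z.1) = (u - X.1) - Z.1 := by abel
    have hq1 : (‖u - (X.1 - Z.1)‖ ^ 2 : ℝ)
        = ‖u - X.1‖ ^ 2 + 2 * (inner ℝ (u - X.1) Z.1 : ℝ) + ‖Z.1‖ ^ 2 := by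
      rw [e1, norm_add_sq_real]
    have hq2 : (‖u - (X.1 + Z.1)‖ ^ 2 : ℝ)
        = ‖u - X.1‖ ^ 2 - 2 * (inner ℝ (u - X.1) Z.1 : ℝ) + ‖Z.1‖ ^ 2 := by
      rw [e2, norm_sub_sq_real]
    have hcomm : (inner ℝ Z.2 (u - X.1) : ℝ) = (inner ℝ u Z.2 : ℝ) - (inner ℝ X.1 Z.2 : ℝ) := by
      rw [real_inner_comm, inner_sub_left]
    simp only [cs, map_mul, Complex.conj_ofReal, ← Complex.exp_conj]
    rw [mul_mul_mul_comm, ← Complex.exp_add, ← Complex.ofReal_mul,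
      ← Real.rpow_add Real.pi_pos, mul_assoc, ← Complex.exp_add]
    congr 2
    · congr 1; ring
    · simp only [map_add, map_sub, map_mul, map_div₀, map_neg, map_ofNat, Complex.conj_ofReal,
        Complex.conj_I, Prod.fst_sub, Prod.fst_add, Prod.snd_sub, Prod.snd_add,
        inner_sub_right, inner_add_right, inner_sub_left, inner_add_left, hq1, hq2, hcomm]
      push_cast
      ring
  have step1 := integral_congr_ae (μ := (volume : Measure (En n))) (Filter.Eventually.of_forall hE0)
  rw [step1, integral_const_mul, gauss_shift n X.1 Z.2, ← mul_assoc,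
    mul_comm _ (((Real.pi ^ ((n : ℝ) / 2) : ℝ) : ℂ)), ← mul_assoc, ← Complex.ofReal_mul,
    ← Real.rpow_add Real.pi_pos, show ((n:ℝ)/2 + -(n:ℝ)/2) = 0 by ring, Real.rpow_zero,
    Complex.ofReal_one, one_mul, ← Complex.exp_add]
  congr 1
  simp only [symp]
  push_cast
  ring

/-- `⟨AΨ_{X+Z},Ψ_{X-Z}⟩ / ⟨Ψ_{X+Z},Ψ_{X-Z}⟩ = ⟨A e^{Φ_S(Z)}Ψ_X, e^{-Φ_S(Z)}Ψ_X⟩`,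
where `e^{±Φ_S(Z)}` acts on coherent states by `e^{Φ_S(Z)}Ψ_X = expCoef Z X • Ψ_{X+Z}`. -/
theorem conjugated_matrix_element (n : ℕ)
    (hcs : ∀ X : En n × En n, MemLp (cs n X) 2 (volume : Measure (En n)))
    (A : Lp ℂ 2 (volume : Measure (En n)) →L[ℂ] Lp ℂ 2 (volume : Measure (En n)))
    (X Z : En n × En n) :
    (inner ℂ ((hcs (X - Z)).toLp (cs n (X - Z))) (A ((hcs (X + Z)).toLp (cs n (X + Z)))) : ℂ) /
        (inner ℂ ((hcs (X - Z)).toLp (cs n (X - Z))) ((hcs (X + Z)).toLp (cs n (X + Z))) : ℂ) =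
      (inner ℂ (expCoef n (-Z) X • (hcs (X - Z)).toLp (cs n (X - Z)))
        (A (expCoef n Z X • (hcs (X + Z)).toLp (cs n (X + Z)))) : ℂ) := by
  have hip : (inner ℂ ((hcs (X - Z)).toLp (cs n (X - Z)))
      ((hcs (X + Z)).toLp (cs n (X + Z))) : ℂ) =
      Complex.exp (-((‖Z.1‖ ^ 2 + ‖Z.2‖ ^ 2 : ℝ) : ℂ)
        - Complex.I * ((symp n X Z : ℝ) : ℂ)) := by
    rw [← coherent_inner n X Z, MeasureTheory.L2.inner_def]
    apply integral_congr_ae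
    filter_upwards [(hcs (X - Z)).coeFn_toLp, (hcs (X + Z)).coeFn_toLp] with u hu1 hu2
    rw [hu1, hu2, RCLike.inner_apply, mul_comm]
  have hc : (starRingEnd ℂ) (expCoef n (-Z) X) * expCoef n Z X *
      Complex.exp (-((‖Z.1‖ ^ 2 + ‖Z.2‖ ^ 2 : ℝ) : ℂ)
        - Complex.I * ((symp n X Z : ℝ) : ℂ)) = 1 := by
    simp only [expCoef, ← Complex.exp_conj, ← Complex.exp_add]
    rw [show (1 : ℂ) = Complex.exp 0 from (Complex.exp_zero).symm]
    congr 1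
    simp only [symp, map_add, map_sub, map_mul, map_div₀, map_ofNat, map_neg,
      Complex.conj_ofReal, Complex.conj_I, Prod.fst_neg, Prod.snd_neg,
      inner_neg_left, inner_neg_right, norm_neg]
    push_cast
    ring
  rw [_root_.map_smul, inner_smul_left, inner_smul_right, hip, div_eq_iff (Complex.exp_ne_zero _)]
  generalize (inner ℂ ((hcs (X - Z)).toLp (cs n (X - Z)))
    (A ((hcs (X + Z)).toLp (cs n (X + Z)))) : ℂ) = ia
  linear_combination (-ia) * hc
end
end
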